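/- Special case of the Saito-Shintani lemma: for a finite-dimensional vector space V over a field, an endomorphism T of V, and the cyclic permutation τ on V^{⊗r}, we have Tr(T^r, V) = Tr((T ⊗ T ⊗ ... ⊗ T) ∘ τ, V^{⊗r}). -/

import Mathlib

open scoped TensorProduct

open PiTensorProduct Matrix


namespace SaitoAux
variable {k V ι : Type*} [Field k] [AddCommGroup V] [Module k V]

/-- index equiv `Fin 1 ⊕ Fin n ≃ Fin (n+1)` -/
def sumEquiv (n : ℕ) : (Fin 1 ⊕ Fin n) ≃ Fin (n + 1) :=
  finSumFinEquiv.trans (finCongr (Nat.add_comm 1 n))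

lemma sumEquiv_inl (n : ℕ) : sumEquiv n (Sum.inl 0) = 0 := by
  ext
  simp [sumEquiv]

lemma sumEquiv_inr (n : ℕ) (j : Fin n) : sumEquiv n (Sum.inr j) = j.succ := by
  ext
  simp [sumEquiv, Nat.add_comm]

noncomputable def tpb (b : Module.Basis ι k V) : ∀ n : ℕ, Module.Basis (Fin n → ι) k (⨂[k] (_ : Fin n), V)
  | 0 => (Module.Basis.singleton (Fin 0 → ι) k).map (isEmptyEquiv (Fin 0)).symm
  | (n+1) => ((b.tensorProduct (tpb b n)).map
      (((TensorProduct.congr (subsingletonEquiv (0 : Fin 1)).symm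
          (LinearEquiv.refl k _)).trans (tmulEquiv k V)).trans
        (reindex k (fun _ => V) (sumEquiv n)))).reindex (Fin.consEquiv (fun _ => ι))

lemma tpb_apply (b : Module.Basis ι k V) : ∀ (n : ℕ) (f : Fin n → ι),
    tpb b n f = tprod k (fun i => b (f i))
  | 0, f => by
    rw [tpb, Module.Basis.map_apply, Module.Basis.singleton_apply, LinearEquiv.symm_apply_eq,
      isEmptyEquiv_apply_tprod]
  | (n+1), f => by
    rw [tpb, Module.Basis.reindex_apply, Module.Basis.map_apply]
    have hsymm : (Fin.consEquiv (fun _ : Fin (n+1) => ι)).symm f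
        = (f 0, fun i => f i.succ) := rfl
    rw [hsymm, Module.Basis.tensorProduct_apply, tpb_apply b n]
    rw [LinearEquiv.trans_apply, LinearEquiv.trans_apply, TensorProduct.congr_tmul]
    have h1 : (subsingletonEquiv (0 : Fin 1)).symm (b (f 0))
        = tprod k (fun _ : Fin 1 => b (f 0)) := by
      rw [LinearEquiv.symm_apply_eq, subsingletonEquiv_apply_tprod]
    rw [h1, LinearEquiv.refl_apply, tmulEquiv_apply, reindex_tprod]
    congr 1
    funext i
    induction i using Fin.cases with
    | zero =>
      rw [show (0 : Fin (n+1)) = sumEquiv n (Sum.inl 0) from (sumEquiv_inl n).symm,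
        Equiv.symm_apply_apply]
      simp
    | succ j =>
      rw [show j.succ = sumEquiv n (Sum.inr j) from (sumEquiv_inr n j).symm,
        Equiv.symm_apply_apply]
      rw [sumEquiv_inr]
      simp

end SaitoAux


namespace SaitoAux
variable {k : Type*} [Field k] {ι : Type*} [Fintype ι] [DecidableEq ι]

/-- prepend equivalence for tuples -/
def consE (ι : Type*) (n : ℕ) : (ι × (Fin n → ι)) ≃ (Fin (n+1) → ι) where
  toFun p := Fin.cons p.1 p.2
  invFun f := (f 0, fun i => f i.succ)
  left_inv := by rintro ⟨a, f⟩; simp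
  right_inv := fun f => by
    ext i
    exact congrFun (Fin.cons_self_tail f) i

@[simp] lemma consE_apply {ι : Type*} {n : ℕ} (a : ι) (f : Fin n → ι) :
    consE ι n (a, f) = Fin.cons a f := rfl

lemma pow_entry (N : Matrix ι ι k) : ∀ (n : ℕ) (a c : ι),
    (N ^ (n+1)) a c = ∑ f : Fin n → ι, ∏ i : Fin (n+1),
      N ((Fin.cons a (Fin.snoc f c) : Fin (n+2) → ι) i.castSucc)
        ((Fin.cons a (Fin.snoc f c) : Fin (n+2) → ι) i.succ)
  | 0, a, c => by
    rw [pow_one, Fintype.sum_unique, Fin.prod_univ_one]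
    simp only [Fin.castSucc_zero, Fin.cons_zero, Fin.succ_zero_eq_one]
    rw [show (1 : Fin (0+2)) = Fin.succ 0 from rfl, Fin.cons_succ,
      show (0 : Fin (0+1)) = Fin.last 0 from rfl, Fin.snoc_last]
  | (n+1), a, c => by
    rw [pow_succ', Matrix.mul_apply]
    simp_rw [pow_entry N n, Finset.mul_sum]
    rw [← Equiv.sum_comp (consE ι n)
      (fun F => ∏ i : Fin (n+2),
        N ((Fin.cons a (Fin.snoc F c) : Fin (n+3) → ι) i.castSucc)
          ((Fin.cons a (Fin.snoc F c) : Fin (n+3) → ι) i.succ)),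
      Fintype.sum_prod_type]
    apply Finset.sum_congr rfl
    intro d _
    apply Finset.sum_congr rfl
    intro f _
    rw [consE_apply]
    conv_rhs => rw [Fin.prod_univ_succ]
    have hY : (Fin.cons a (Fin.snoc (Fin.cons d f) c) : Fin (n+3) → ι) ∘ Fin.succ
        = Fin.cons d (Fin.snoc f c) := by
      funext j
      rw [Function.comp_apply, Fin.cons_succ, ← Fin.cons_snoc_eq_snoc_cons]
    congr 1
    · apply Finset.prod_congr rfl
      intro i _
      rw [← Fin.succ_castSucc]
      have h1 := congrFun hY i.castSucc
      have h2 := congrFun hY i.succ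
      simp only [Function.comp_apply] at h1 h2
      rw [h1, h2]

lemma trace_pow_eq (N : Matrix ι ι k) (n : ℕ) :
    (N ^ (n+1)).trace = ∑ F : Fin (n+1) → ι, ∏ i : Fin (n+1),
      N (F i) (F (finRotate (n+1) i)) := by
  calc (N ^ (n+1)).trace
      = ∑ p : ι × (Fin n → ι), ∏ i : Fin (n+1),
          N ((Fin.cons p.1 (Fin.snoc p.2 p.1) : Fin (n+2) → ι) i.castSucc)
            ((Fin.cons p.1 (Fin.snoc p.2 p.1) : Fin (n+2) → ι) i.succ) := by
        rw [Matrix.trace, Fintype.sum_prod_type]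
        exact Finset.sum_congr rfl fun a _ => by rw [Matrix.diag, pow_entry N n]
    _ = ∑ F : Fin (n+1) → ι, ∏ i : Fin (n+1), N (F i) (F (finRotate (n+1) i)) := by
        apply Fintype.sum_equiv (consE ι n)
        rintro ⟨a, f⟩
        rw [consE_apply]
        apply Finset.prod_congr rfl
        intro i _
        have claim1 : (Fin.cons a (Fin.snoc f a) : Fin (n+2) → ι) i.castSucc
            = (Fin.cons a f : Fin (n+1) → ι) i := by
          induction i using Fin.cases with
          | zero => simp
          | succ j => rw [← Fin.succ_castSucc, Fin.cons_succ, Fin.cons_succ, Fin.snoc_castSucc]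
        have claim2 : (Fin.cons a (Fin.snoc f a) : Fin (n+2) → ι) i.succ
            = (Fin.cons a f : Fin (n+1) → ι) (finRotate (n+1) i) := by
          induction i using Fin.lastCases with
          | last => rw [Fin.cons_succ, Fin.snoc_last, finRotate_last, Fin.cons_zero]
          | cast j => rw [Fin.cons_succ, Fin.snoc_castSucc, finRotate_succ_apply,
              Fin.coeSucc_eq_succ, Fin.cons_succ]
        rw [claim1, claim2]

end SaitoAux




/-- Special case of the Saito–Shintani lemma:
`Tr(T^r, V) = Tr((T ⊗ ⋯ ⊗ T) ∘ τ, V^{⊗r})` for the cyclic shift `τ`. -/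
theorem saito_shintani_special {k V : Type*} [Field k] [AddCommGroup V] [Module k V]
    [FiniteDimensional k V] {r : ℕ} (hr : 1 ≤ r)
    (τ : (⨂[k] (_ : Fin r), V) →ₗ[k] (⨂[k] (_ : Fin r), V))
    (hτ : ∀ v : Fin r → V,
      τ (PiTensorProduct.tprod k v) =
        PiTensorProduct.tprod k (fun i => v ((finRotate r).symm i)))
    (T : V →ₗ[k] V) :
    LinearMap.trace k V (T ^ r)
      = LinearMap.trace k (⨂[k] (_ : Fin r), V)
          ((PiTensorProduct.map (fun _ : Fin r => T)) ∘ₗ τ) := by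
  classical
  obtain ⟨n, rfl⟩ : ∃ n, r = n + 1 := ⟨r - 1, by omega⟩
  set ι := Fin (Module.finrank k V) with hι
  let b : Module.Basis ι k V := Module.finBasis k V
  let B : Module.Basis (Fin (n+1) → ι) k (⨂[k] (_ : Fin (n+1)), V) := SaitoAux.tpb b (n+1)
  set M : Matrix ι ι k := LinearMap.toMatrix b b T with hM
  set σ : Equiv.Perm (Fin (n+1)) := finRotate (n+1) with hσ
  -- matrix entries of T
  have hT : ∀ j : ι, T (b j) = ∑ c : ι, M c j • b c := by
    intro j
    conv_lhs => rw [← b.sum_repr (T (b j))]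
    exact Finset.sum_congr rfl fun c _ => by rw [hM, LinearMap.toMatrix_apply]
  -- key computation
  have key : ∀ F : Fin (n+1) → ι,
      ((PiTensorProduct.map (fun _ : Fin (n+1) => T)) ∘ₗ τ) (B F)
        = ∑ G : Fin (n+1) → ι,
            (∏ i : Fin (n+1), M (G i) (F (σ.symm i))) • B G := by
    intro F
    rw [LinearMap.comp_apply, show B F = tprod k (fun i => b (F i)) from
      SaitoAux.tpb_apply b (n+1) F, hτ, map_tprod]
    have h1 : (fun i => T (b (F (σ.symm i))))
        = fun i => ∑ c : ι, M c (F (σ.symm i)) • b c := funext fun i => hT _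
    rw [h1, MultilinearMap.map_sum]
    apply Finset.sum_congr rfl
    intro G _
    rw [MultilinearMap.map_smul_univ]
    rw [show tprod k (fun i => b (G i)) = B G from (SaitoAux.tpb_apply b (n+1) G).symm]
  -- diagonal entries
  have diag : ∀ F : Fin (n+1) → ι,
      (LinearMap.toMatrix B B ((PiTensorProduct.map (fun _ : Fin (n+1) => T)) ∘ₗ τ)) F F
        = ∏ i : Fin (n+1), M (F i) (F (σ.symm i)) := by
    intro F
    rw [LinearMap.toMatrix_apply, key F]
    rw [map_sum, Finset.sum_apply']
    rw [Finset.sum_eq_single F]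
    · rw [_root_.map_smul, Finsupp.smul_apply, Module.Basis.repr_self_apply, if_pos rfl, smul_eq_mul, mul_one]
    · intro G _ hG
      rw [_root_.map_smul, Finsupp.smul_apply, Module.Basis.repr_self_apply, if_neg hG, smul_eq_mul, mul_zero]
    · intro h
      exact absurd (Finset.mem_univ F) h
  -- assemble
  rw [LinearMap.trace_eq_matrix_trace k b, ← LinearMap.toMatrix_pow b T (n+1)]
  rw [LinearMap.trace_eq_matrix_trace k B, Matrix.trace]
  simp only [Matrix.diag]
  calc (M ^ (n+1)).trace
      = ((Mᵀ) ^ (n+1)).trace := by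
        rw [← Matrix.transpose_pow, Matrix.trace_transpose]
    _ = ∑ F : Fin (n+1) → ι, ∏ i : Fin (n+1), Mᵀ (F i) (F (σ i)) :=
        SaitoAux.trace_pow_eq Mᵀ n
    _ = ∑ F : Fin (n+1) → ι, ∏ i : Fin (n+1), M (F i) (F (σ.symm i)) := by
        apply Finset.sum_congr rfl
        intro F _
        rw [← Equiv.prod_comp σ (fun i => M (F i) (F (σ.symm i)))]
        apply Finset.prod_congr rfl
        intro i _
        rw [Equiv.symm_apply_apply, Matrix.transpose_apply]
    _ = ∑ F : Fin (n+1) → ι,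
          (LinearMap.toMatrix B B ((PiTensorProduct.map (fun _ : Fin (n+1) => T)) ∘ₗ τ)) F F := by
        exact Finset.sum_congr rfl fun F _ => (diag F).symm
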